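/- Let R be a commutative ring and M_1 →^α M_2 →^β M_3 → 0 an exact sequence of R-modules. Then for every n ≥ 1 the sequence M_1 ⊗_R Λ^{n−1} M_2 → Λ^n M_2 → Λ^n M_3 → 0 is exact, where the first map sends m ⊗ (x_1 ∧ ⋯ ∧ x_{n−1}) to α(m) ∧ x_1 ∧ ⋯ ∧ x_{n−1} and the second map is Λ^n β. -/

import Mathlib

/-- The image of the `n`-th exterior power under the algebra map induced by a linear map. -/
theorem extMap_mem {R : Type*} [CommRing R] {M N : Type*} [AddCommGroup M] [Module R M]
    [AddCommGroup N] [Module R N] (n : ℕ) (f : M →ₗ[R] N) {x : ExteriorAlgebra R M}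
    (hx : x ∈ ⋀[R]^n M) : ExteriorAlgebra.map f x ∈ ⋀[R]^n N := by
  rw [← ExteriorAlgebra.ιMulti_span_fixedDegree] at hx ⊢
  refine Submodule.span_induction ?_ ?_ ?_ ?_ hx
  · rintro x ⟨v, rfl⟩
    rw [ExteriorAlgebra.map_apply_ιMulti]
    exact Submodule.subset_span ⟨f ∘ v, rfl⟩
  · simp
  · intro x y _ _ hx hy
    rw [map_add]
    exact Submodule.add_mem _ hx hy
  · intro r x _ hx
    rw [map_smul]
    exact Submodule.smul_mem _ r hx

/-- The linear map `⋀[R]^n M → ⋀[R]^n N` functorially induced by a linear map `f : M → N`;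
it sends `x₁ ∧ ⋯ ∧ xₙ` to `f x₁ ∧ ⋯ ∧ f xₙ`. -/
noncomputable def extPowMap {R : Type*} [CommRing R] {M N : Type*} [AddCommGroup M] [Module R M]
    [AddCommGroup N] [Module R N] (n : ℕ) (f : M →ₗ[R] N) : ⋀[R]^n M →ₗ[R] ⋀[R]^n N :=
  (ExteriorAlgebra.map f).toLinearMap.restrict fun x hx => extMap_mem n f hx

/-- The wedge product `v 0 ∧ ⋯ ∧ v (n-1)` as an element of the `n`-th exterior power. -/
noncomputable def wedgeProd (R : Type*) [CommRing R] {M : Type*} [AddCommGroup M] [Module R M]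
    (n : ℕ) (v : Fin n → M) : ⋀[R]^n M :=
  ⟨ExteriorAlgebra.ιMulti R n v, ExteriorAlgebra.ιMulti_range R n (Set.mem_range_self v)⟩

section Aux

variable {R : Type*} [CommRing R] {M N : Type*} [AddCommGroup M] [Module R M]
  [AddCommGroup N] [Module R N]

lemma wedgeProd_coe (n : ℕ) (v : Fin n → M) :
    (wedgeProd R n v : ExteriorAlgebra R M) = ExteriorAlgebra.ιMulti R n v := rfl

/-- `ιMulti` codrestricted to the `n`-th exterior power. -/
noncomputable def ιW (R : Type*) [CommRing R] {M : Type*} [AddCommGroup M] [Module R M] (n : ℕ) :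
    M [⋀^Fin n]→ₗ[R] (⋀[R]^n M) :=
  (ExteriorAlgebra.ιMulti R n).codRestrict _
    (fun v => ExteriorAlgebra.ιMulti_range R n (Set.mem_range_self v))

lemma ιW_apply (n : ℕ) (v : Fin n → M) : ιW R n v = wedgeProd R n v := rfl

lemma extPowMap_wedge (n : ℕ) (f : M →ₗ[R] N) (v : Fin n → M) :
    extPowMap n f (wedgeProd R n v) = wedgeProd R n (f ∘ v) := by
  apply Subtype.ext
  show ExteriorAlgebra.map f (wedgeProd R n v : ExteriorAlgebra R M) = (wedgeProd R n (f ∘ v) : ExteriorAlgebra R N)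
  simp only [wedgeProd_coe]
  exact ExteriorAlgebra.map_apply_ιMulti f v

lemma wedge_span (n : ℕ) :
    Submodule.span R (Set.range (wedgeProd R n (M := M))) = ⊤ := by
  apply Submodule.map_injective_of_injective (⋀[R]^n M).injective_subtype
  rw [Submodule.map_span, Submodule.map_top, Submodule.range_subtype]
  have himg : ((⋀[R]^n M).subtype '' Set.range (wedgeProd R n))
      = Set.range (ExteriorAlgebra.ιMulti R n (M := M)) := by
    ext x
    simp only [Set.mem_image, Set.mem_range]
    constructor
    · rintro ⟨_, ⟨v, rfl⟩, rfl⟩; exact ⟨v, rfl⟩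
    · rintro ⟨v, rfl⟩; exact ⟨wedgeProd R n v, ⟨v, rfl⟩, rfl⟩
  rw [himg, ExteriorAlgebra.ιMulti_span_fixedDegree]

end Aux

/-- If `M₁ →α M₂ →β M₃ → 0` is exact, then for `n = k+1 ≥ 1` the sequence
`M₁ ⊗ Λ^k M₂ → Λ^{k+1} M₂ → Λ^{k+1} M₃ → 0` is exact: `Λ^{k+1} β` is surjective and its
kernel is the image of the first map, i.e. the span of the elements `α(m) ∧ x₁ ∧ ⋯ ∧ x_k`. -/
theorem exteriorPower_right_exact (R : Type*) [CommRing R] (M₁ M₂ M₃ : Type*)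
    [AddCommGroup M₁] [Module R M₁] [AddCommGroup M₂] [Module R M₂]
    [AddCommGroup M₃] [Module R M₃]
    (α : M₁ →ₗ[R] M₂) (β : M₂ →ₗ[R] M₃)
    (hsurj : Function.Surjective β) (hexact : LinearMap.range α = LinearMap.ker β) (k : ℕ) :
    Function.Surjective (extPowMap (k+1) β) ∧
    LinearMap.ker (extPowMap (k+1) β) =
      Submodule.span R {z : ⋀[R]^(k+1) M₂ | ∃ (m : M₁) (y : Fin k → M₂),
        z = wedgeProd R (k+1) (Fin.cons (α m) y)} := by
  set σ := Function.surjInv hsurj with hσdef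
  have hβσ : ∀ x, β (σ x) = x := Function.surjInv_eq hsurj
  set W : Submodule R (⋀[R]^(k+1) M₂) :=
    Submodule.span R {z : ⋀[R]^(k+1) M₂ | ∃ (m : M₁) (y : Fin k → M₂),
      z = wedgeProd R (k+1) (Fin.cons (α m) y)} with hWdef
  -- Lemma A: a wedge with a coordinate in ker β lies in W
  have memW : ∀ (v : Fin (k+1) → M₂) (i : Fin (k+1)), β (v i) = 0 →
      wedgeProd R (k+1) v ∈ W := by
    intro v i hi
    obtain ⟨m, hm⟩ : v i ∈ LinearMap.range α := by rw [hexact]; exact hi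
    by_cases h0 : i = 0
    · subst h0
      apply Submodule.subset_span
      exact ⟨m, Fin.tail v, by rw [hm, Fin.cons_self_tail]⟩
    · have hswap : ExteriorAlgebra.ιMulti R (k+1) (v ∘ Equiv.swap (0 : Fin (k+1)) i)
          = - ExteriorAlgebra.ιMulti R (k+1) v :=
        (ExteriorAlgebra.ιMulti R (k+1)).map_swap v (Ne.symm h0)
    -- so wedgeProd v = - wedgeProd (v ∘ swap 0 i)
      have heq : wedgeProd R (k+1) v = - wedgeProd R (k+1) (v ∘ Equiv.swap (0 : Fin (k+1)) i) := by
        apply Subtype.ext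
        show (wedgeProd R (k+1) v : ExteriorAlgebra R M₂)
          = -(wedgeProd R (k+1) (v ∘ Equiv.swap (0 : Fin (k+1)) i) : ExteriorAlgebra R M₂)
        rw [wedgeProd_coe, wedgeProd_coe, hswap, neg_neg]
      rw [heq]
      apply Submodule.neg_mem
      apply Submodule.subset_span
      refine ⟨m, Fin.tail (v ∘ Equiv.swap (0 : Fin (k+1)) i), ?_⟩
      have h00 : (v ∘ Equiv.swap (0 : Fin (k+1)) i) 0 = α m := by
        simp only [Function.comp_apply, Equiv.swap_apply_left]; exact hm.symm
      rw [← h00, Fin.cons_self_tail]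
  -- the alternating map into the quotient
  set Q := (⋀[R]^(k+1) M₂) ⧸ W with hQdef
  set H : M₂ [⋀^Fin (k+1)]→ₗ[R] Q := W.mkQ.compAlternatingMap (ιW R (k+1)) with hHdef
  have Happly : ∀ v : Fin (k+1) → M₂, H v = W.mkQ (wedgeProd R (k+1) v) := fun v => rfl
  have Hzero : ∀ (v : Fin (k+1) → M₂) (i : Fin (k+1)), β (v i) = 0 → H v = 0 := by
    intro v i hi
    rw [Happly, Submodule.mkQ_apply, Submodule.Quotient.mk_eq_zero]
    exact memW v i hi
  -- Lemma B: H only depends on β ∘ v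
  have Hcong : ∀ v v' : Fin (k+1) → M₂, β ∘ v = β ∘ v' → H v = H v' := by
    intro v v' h
    have key : ∀ s : Finset (Fin (k+1)),
        H (fun i => if i ∈ s then v' i else v i) = H v := by
      intro s
      induction s using Finset.induction_on with
      | empty => simp
      | @insert j s hj ih =>
        have hfe : (fun i => if i ∈ insert j s then v' i else v i)
            = Function.update (fun i => if i ∈ s then v' i else v i) j (v' j) := by
          funext i
          by_cases hij : i = j
          · subst hij; simp [hj]
          · simp [hij, Function.update_of_ne hij]
        rw [hfe]
        have hupd : Function.update (fun i => if i ∈ s then v' i else v i) j (v j)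
            = (fun i => if i ∈ s then v' i else v i) := by
          funext i
          by_cases hij : i = j
          · subst hij; simp [hj]
          · simp [Function.update_of_ne hij]
        have hsub := H.map_update_sub (fun i => if i ∈ s then v' i else v i) j (v' j) (v j)
        have hker : H (Function.update (fun i => if i ∈ s then v' i else v i) j (v' j - v j))
            = 0 := by
          refine Hzero _ j ?_
          rw [Function.update_self, map_sub]
          have hj' := congrFun h j
          simp only [Function.comp_apply] at hj'
          rw [hj', sub_self]
        rw [hker] at hsub
        have heq2 : H (Function.update (fun i => if i ∈ s then v' i else v i) j (v' j))
            = H (Function.update (fun i => if i ∈ s then v' i else v i) j (v j)) :=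
          sub_eq_zero.mp hsub.symm
        rw [heq2, hupd, ih]
    have huniv := key Finset.univ
    simpa using huniv.symm
  have Hσ : ∀ u : Fin (k+1) → M₂, H (fun i => σ (β (u i))) = H u := by
    intro u
    refine Hcong _ _ ?_
    funext i
    simp [hβσ]
  -- the alternating map g on M₃
  have hupdσ : ∀ (u : Fin (k+1) → M₃) (i : Fin (k+1)) (z : M₃),
      σ ∘ Function.update u i z = Function.update (σ ∘ u) i (σ z) := by
    intro u i z
    funext j
    by_cases hj : j = i
    · subst hj; simp
    · simp [Function.update_of_ne hj]
  set g : M₃ [⋀^Fin (k+1)]→ₗ[R] Q :=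
    { toFun := fun u => H (σ ∘ u)
      map_update_add' := by
        intro inst u i x y
        have e : ∀ z, σ ∘ Function.update u i z = Function.update (σ ∘ u) i (σ z) := by
          intro z
          funext j
          rcases eq_or_ne j i with rfl | hj
          · simp
          · simp [Function.update_of_ne hj]
        show H (σ ∘ Function.update u i (x + y))
          = H (σ ∘ Function.update u i x) + H (σ ∘ Function.update u i y)
        rw [e, e, e]
        have h1 : H (Function.update (σ ∘ u) i (σ (x + y)))
            = H (Function.update (σ ∘ u) i (σ x + σ y)) := by
          refine Hcong _ _ ?_
          funext j
          by_cases hj : j = i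
          · subst hj; simp [hβσ]
          · simp [Function.update_of_ne hj]
        rw [h1, H.map_update_add]
      map_update_smul' := by
        intro inst u i r x
        have e : ∀ z, σ ∘ Function.update u i z = Function.update (σ ∘ u) i (σ z) := by
          intro z
          funext j
          rcases eq_or_ne j i with rfl | hj
          · simp
          · simp [Function.update_of_ne hj]
        show H (σ ∘ Function.update u i (r • x)) = r • H (σ ∘ Function.update u i x)
        rw [e, e]
        have h1 : H (Function.update (σ ∘ u) i (σ (r • x)))
            = H (Function.update (σ ∘ u) i (r • σ x)) := by
          refine Hcong _ _ ?_
          funext j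
          by_cases hj : j = i
          · subst hj; simp [hβσ]
          · simp [Function.update_of_ne hj]
        rw [h1, H.map_update_smul]
      map_eq_zero_of_eq' := by
        intro u i j hij hne
        exact H.map_eq_zero_of_eq (σ ∘ u) (by simp [Function.comp_apply, hij]) hne } with hgdef
  have gapply : ∀ u : Fin (k+1) → M₃, g u = H (σ ∘ u) := fun u => rfl
  -- lift to the exterior power of M₃
  set fam : ∀ i : ℕ, M₃ [⋀^Fin i]→ₗ[R] Q :=
    Function.update (fun i => (0 : M₃ [⋀^Fin i]→ₗ[R] Q)) (k+1) g with hfamdef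
  have hfam : fam (k+1) = g := Function.update_self _ _ _
  set G : (⋀[R]^(k+1) M₃) →ₗ[R] Q :=
    (ExteriorAlgebra.liftAlternating fam).comp (⋀[R]^(k+1) M₃).subtype with hGdef
  have hGwedge : ∀ u : Fin (k+1) → M₃, G (wedgeProd R (k+1) u) = g u := by
    intro u
    show ExteriorAlgebra.liftAlternating fam
      ((wedgeProd R (k+1) u : ExteriorAlgebra R M₃)) = g u
    rw [wedgeProd_coe, ExteriorAlgebra.liftAlternating_apply_ιMulti, hfam]
  have hGπ : ∀ x : ⋀[R]^(k+1) M₂, G (extPowMap (k+1) β x) = W.mkQ x := by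
    intro x
    have hx : x ∈ Submodule.span R (Set.range (wedgeProd R (k+1) (M := M₂))) := by
      rw [wedge_span]; trivial
    refine Submodule.span_induction ?_ ?_ ?_ ?_ hx
    · rintro _ ⟨v, rfl⟩
      rw [extPowMap_wedge, hGwedge, gapply]
      have : H (σ ∘ (β ∘ v)) = H v := by
        have := Hσ v
        simpa [Function.comp_def] using this
      rw [this, Happly]
    · simp
    · intro x y _ _ hx hy
      rw [map_add, map_add, hx, hy, map_add]
    · intro r x _ hx
      rw [map_smul, map_smul, hx, map_smul]
  constructor
  · -- surjectivity
    rw [← LinearMap.range_eq_top, ← top_le_iff, ← wedge_span (k+1), Submodule.span_le]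
    rintro _ ⟨u, rfl⟩
    refine ⟨wedgeProd R (k+1) (σ ∘ u), ?_⟩
    rw [extPowMap_wedge]
    congr 1
    funext i
    simp [hβσ]
  · -- kernel
    refine le_antisymm ?_ ?_
    · intro x hx
      rw [LinearMap.mem_ker] at hx
      have := hGπ x
      rw [hx, map_zero] at this
      have hx0 : W.mkQ x = 0 := this.symm
      rwa [← Submodule.Quotient.mk_eq_zero W]
    · refine Submodule.span_le.mpr ?_
      rintro z ⟨m, y, rfl⟩
      rw [SetLike.mem_coe, LinearMap.mem_ker, extPowMap_wedge]
      apply Subtype.ext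
      show (wedgeProd R (k+1) (β ∘ Fin.cons (α m) y) : ExteriorAlgebra R M₃) = 0
      rw [wedgeProd_coe]
      refine (ExteriorAlgebra.ιMulti R (k+1)).map_coord_zero 0 ?_
      have : α m ∈ LinearMap.ker β := by rw [← hexact]; exact ⟨m, rfl⟩
      simpa using this
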